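/- arXiv:2012.04508 — 2 statements merged into one kernel-verified Lean document; each statement's English description precedes it below -/
import Mathlib

section
/- Let 1 ≤ d ≤ n−1 and let g ∈ GL_n(ℝ) be written as g = [B | C], where B is the n×d matrix of its first d columns and C the n×(n−d) matrix of its last n−d columns. Let π : ℝⁿ → (span B)^⊥ be the orthogonal projection onto the orthogonal complement of the column span of B, and let D be the n×(n−d) matrix consisting of the last n−d columns of (gᵀ)⁻¹. Then the columns of π∘C (the projections of the columns of C) are linearly independent and span (span B)^⊥, and the ℤ-span of the columns of D equals the dual lattice of the ℤ-span of the columns of π∘C. -/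
open Matrix

noncomputable section

/-- The set of all integer linear combinations of the columns of `B`
(the `ℤ`-span of the columns of `B`). -/
def zspan {n d : ℕ} (B : Matrix (Fin n) (Fin d) ℝ) : Set (Fin n → ℝ) :=
  Set.range fun c : Fin d → ℤ => B.mulVec fun j => (c j : ℝ)

/-- `B` is a `ℤ`-basis matrix for `Λ`: its columns are `ℝ`-linearly independent
and their `ℤ`-span is `Λ`. -/
def IsLatticeBasis {n d : ℕ} (B : Matrix (Fin n) (Fin d) ℝ) (Λ : Set (Fin n → ℝ)) : Prop :=
  LinearIndependent ℝ (fun j : Fin d => fun i : Fin n => B i j) ∧ Λ = zspan B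

/-- `Λ` is a `d`-lattice in `ℝⁿ`: it is generated over `ℤ` by `d`
linearly independent vectors. -/
def IsDLattice {n : ℕ} (d : ℕ) (Λ : Set (Fin n → ℝ)) : Prop :=
  ∃ B : Matrix (Fin n) (Fin d) ℝ, IsLatticeBasis B Λ

/-- `ℤⁿ` viewed as a subset of `ℝⁿ`. -/
def intLattice (n : ℕ) : Set (Fin n → ℝ) :=
  Set.range fun c : Fin n → ℤ => fun i => (c i : ℝ)

/-- `Λ` is primitive inside `Δ` : `Λ = Δ ∩ span_ℝ Λ`. -/
def IsPrimitiveIn {n : ℕ} (Λ Δ : Set (Fin n → ℝ)) : Prop :=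
  Λ = Δ ∩ (Submodule.span ℝ Λ : Set (Fin n → ℝ))

/-- The dual lattice `Λ* = {y ∈ V_Λ : ⟨x,y⟩ ∈ ℤ for all x ∈ Λ}`. -/
def dualLattice {n : ℕ} (Λ : Set (Fin n → ℝ)) : Set (Fin n → ℝ) :=
  {y | y ∈ Submodule.span ℝ Λ ∧ ∀ x ∈ Λ, ∃ m : ℤ, x ⬝ᵥ y = (m : ℝ)}

/-- Orthogonal complement with respect to the standard inner product on `ℝⁿ`. -/
def perp {n : ℕ} (V : Submodule ℝ (Fin n → ℝ)) : Submodule ℝ (Fin n → ℝ) where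
  carrier := {y | ∀ x ∈ V, x ⬝ᵥ y = 0}
  add_mem' := by
    intro a b ha hb x hx
    simp [dotProduct_add, ha x hx, hb x hx]
  zero_mem' := by
    intro x hx
    simp
  smul_mem' := by
    intro c a ha x hx
    simp [dotProduct_smul, ha x hx]

def dotR {n : ℕ} (w : Fin n → ℝ) : (Fin n → ℝ) →ₗ[ℝ] ℝ where
  toFun v := v ⬝ᵥ w
  map_add' a b := add_dotProduct a b w
  map_smul' c a := smul_dotProduct c a w

def dotL {n : ℕ} (v : Fin n → ℝ) : (Fin n → ℝ) →ₗ[ℝ] ℝ where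
  toFun w := v ⬝ᵥ w
  map_add' a b := dotProduct_add v a b
  map_smul' c a := dotProduct_smul c v a

lemma mulVec_eq_sum_cols {n d : ℕ} (M : Matrix (Fin n) (Fin d) ℝ) (v : Fin d → ℝ) :
    M.mulVec v = ∑ j, v j • (fun i => M i j) := by
  funext i
  simp [Matrix.mulVec, dotProduct, Finset.sum_apply, mul_comm]

lemma col_mem_zspan {n d : ℕ} (M : Matrix (Fin n) (Fin d) ℝ) (j : Fin d) :
    (fun i => M i j) ∈ zspan M :=
  ⟨Pi.single j 1, by funext i; simp [Matrix.mulVec, dotProduct, Pi.single_apply]⟩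

lemma span_zspan {n d : ℕ} (M : Matrix (Fin n) (Fin d) ℝ) :
    Submodule.span ℝ (zspan M) =
      Submodule.span ℝ (Set.range fun j : Fin d => fun i : Fin n => M i j) := by
  apply le_antisymm <;> rw [Submodule.span_le]
  · rintro _ ⟨c, rfl⟩
    show M.mulVec (fun j => (c j : ℝ)) ∈ _
    rw [mulVec_eq_sum_cols]
    exact Submodule.sum_mem _ fun j _ =>
      Submodule.smul_mem _ _ (Submodule.subset_span ⟨j, rfl⟩)
  · rintro _ ⟨j, rfl⟩
    exact Submodule.subset_span (col_mem_zspan M j)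

lemma mem_perp_span {n : ℕ} {S : Set (Fin n → ℝ)} {y : Fin n → ℝ}
    (h : ∀ x ∈ S, x ⬝ᵥ y = 0) : y ∈ perp (Submodule.span ℝ S) := by
  intro x hx
  induction hx using Submodule.span_induction with
  | mem x hx => exact h x hx
  | zero => simp
  | add a b _ _ ha hb => simp [add_dotProduct, ha, hb]
  | smul c a _ ha => simp [smul_dotProduct, ha]

lemma dot_sum_smul {n e : ℕ} (u : Fin n → ℝ) (w : Fin e → Fin n → ℝ) (a : Fin e → ℝ)
    (j : Fin e) (h : ∀ k, u ⬝ᵥ w k = if j = k then 1 else 0) :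
    u ⬝ᵥ (∑ k, a k • w k) = a j := by
  have : dotL u (∑ k, a k • w k) = a j := by
    rw [map_sum]
    have hterm : ∀ k ∈ Finset.univ, dotL u (a k • w k) = if j = k then a k else 0 := by
      intro k _
      rw [_root_.map_smul, smul_eq_mul]
      show a k * (u ⬝ᵥ w k) = _
      rw [h k]
      split <;> simp
    rw [Finset.sum_congr rfl hterm, Finset.sum_ite_eq]
    simp
  exact this

lemma sum_smul_dot {n e : ℕ} (u : Fin n → ℝ) (w : Fin e → Fin n → ℝ) (a : Fin e → ℝ)
    (j : Fin e) (h : ∀ k, w k ⬝ᵥ u = if j = k then 1 else 0) :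
    (∑ k, a k • w k) ⬝ᵥ u = a j := by
  have : dotR u (∑ k, a k • w k) = a j := by
    rw [map_sum]
    have hterm : ∀ k ∈ Finset.univ, dotR u (a k • w k) = if j = k then a k else 0 := by
      intro k _
      rw [_root_.map_smul, smul_eq_mul]
      show a k * (w k ⬝ᵥ u) = _
      rw [h k]
      split <;> simp
    rw [Finset.sum_congr rfl hterm, Finset.sum_ite_eq]
    simp
  exact this

/-- for `g = [B | C] ∈ GL_n(ℝ)`, the orthogonal projections of the
columns of `C` to `(span B)^⊥` are independent and span `(span B)^⊥`, and the
last `n-d` columns of `(gᵀ)⁻¹` span (over `ℤ`) the dual lattice of the `ℤ`-span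
of these projections. -/
theorem stmt6 (n d : ℕ) (hd : 1 ≤ d) (hdn : d ≤ n - 1) (hn : 2 ≤ n)
    (g : Matrix (Fin n) (Fin n) ℝ) (hg : IsUnit g.det)
    (B : Matrix (Fin n) (Fin d) ℝ)
    (hB : ∀ (i : Fin n) (j : Fin d), B i j = g i (Fin.castLE (by omega) j))
    (C : Matrix (Fin n) (Fin (n - d)) ℝ)
    (hC : ∀ (i : Fin n) (j : Fin (n - d)),
      C i j = g i ⟨d + (j : ℕ), by have := j.isLt; omega⟩)
    (D : Matrix (Fin n) (Fin (n - d)) ℝ)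
    (hD : ∀ (i : Fin n) (j : Fin (n - d)),
      D i j = (gᵀ)⁻¹ i ⟨d + (j : ℕ), by have := j.isLt; omega⟩)
    (π : (Fin n → ℝ) →ₗ[ℝ] (Fin n → ℝ))
    (hπ : ∀ x : Fin n → ℝ,
      π x ∈ perp (Submodule.span ℝ (Set.range fun j : Fin d => fun i : Fin n => B i j)) ∧
      x - π x ∈ Submodule.span ℝ (Set.range fun j : Fin d => fun i : Fin n => B i j)) :
    LinearIndependent ℝ (fun j : Fin (n - d) => π (fun i : Fin n => C i j)) ∧
    Submodule.span ℝ (Set.range fun j : Fin (n - d) => π (fun i : Fin n => C i j)) =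
      perp (Submodule.span ℝ (Set.range fun j : Fin d => fun i : Fin n => B i j)) ∧
    zspan D = dualLattice (zspan (Matrix.of fun i (j : Fin (n - d)) =>
      π (fun k : Fin n => C k j) i)) := by
  have hnd : d + (n - d) = n := by omega
  set H : Matrix (Fin n) (Fin n) ℝ := (gᵀ)⁻¹ with hH
  have hgT : IsUnit gᵀ.det := by rwa [Matrix.det_transpose]
  have hmul : gᵀ * H = 1 := Matrix.mul_nonsing_inv _ hgT
  have hmul' : H * gᵀ = 1 := Matrix.nonsing_inv_mul _ hgT
  have hbi : ∀ i j : Fin n, (fun k => g k i) ⬝ᵥ (fun k => H k j) = if i = j then 1 else 0 := by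
    intro i j
    have h1 := congrFun (congrFun hmul i) j
    simpa [Matrix.mul_apply, Matrix.one_apply, dotProduct, Matrix.transpose_apply] using h1
  set ι : Fin (n - d) → Fin n := fun k => ⟨d + (k : ℕ), by have := k.isLt; omega⟩ with hι
  have hDH : ∀ (i : Fin n) (k : Fin (n - d)), D i k = H i (ι k) := fun i k => hD i k
  have hBD : ∀ (j : Fin d) (k : Fin (n - d)),
      (fun i => B i j) ⬝ᵥ (fun i => D i k) = 0 := by
    intro j k
    have h1 : (fun i => B i j) = (fun i => g i (Fin.castLE (by omega) j)) := by
      funext i; exact hB i j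
    have h2 : (fun i => D i k) = (fun i => H i (ι k)) := by
      funext i; exact hDH i k
    rw [h1, h2, hbi]
    have hne : (Fin.castLE (by omega : d ≤ n) j) ≠ ι k := by
      intro h
      have h' : (j : ℕ) = d + (k : ℕ) := congrArg Fin.val h
      omega
    simp [hne]
  have hCD : ∀ (j k : Fin (n - d)),
      (fun i => C i j) ⬝ᵥ (fun i => D i k) = if j = k then 1 else 0 := by
    intro j k
    have h1 : (fun i => C i j) = (fun i => g i (ι j)) := by funext i; exact hC i j
    have h2 : (fun i => D i k) = (fun i => H i (ι k)) := by funext i; exact hDH i k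
    rw [h1, h2, hbi]
    have hiff : ι j = ι k ↔ j = k := by
      constructor
      · intro h
        have h' : d + (j : ℕ) = d + (k : ℕ) := congrArg Fin.val h
        exact Fin.ext (by omega)
      · intro h; rw [h]
    simp only [hiff]
  set SB : Set (Fin n → ℝ) := Set.range fun j : Fin d => fun i : Fin n => B i j with hSB
  have hDperp : ∀ k : Fin (n - d), (fun i => D i k) ∈ perp (Submodule.span ℝ SB) := by
    intro k
    apply mem_perp_span
    rintro _ ⟨j, rfl⟩
    exact hBD j k
  set v : Fin (n - d) → (Fin n → ℝ) := fun j => π (fun i : Fin n => C i j) with hv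
  have hPD : ∀ (j k : Fin (n - d)), v j ⬝ᵥ (fun i => D i k) = if j = k then 1 else 0 := by
    intro j k
    have h1 : (fun i => C i j) - v j ∈ Submodule.span ℝ SB := (hπ _).2
    have h2 : ((fun i => C i j) - v j) ⬝ᵥ (fun i => D i k) = 0 := hDperp k _ h1
    rw [sub_dotProduct] at h2
    rw [← hCD j k]
    linarith
  have hindv : LinearIndependent ℝ v := by
    rw [Fintype.linearIndependent_iff]
    intro a ha k
    have h1 : (∑ j, a j • v j) ⬝ᵥ (fun i => D i k) = a k :=
      sum_smul_dot _ v a k (fun j => by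
        rw [hPD j k]
        exact if_congr eq_comm rfl rfl)
    rw [ha, zero_dotProduct] at h1
    exact h1.symm
  have hindD : LinearIndependent ℝ (fun k : Fin (n - d) => fun i : Fin n => D i k) := by
    rw [Fintype.linearIndependent_iff]
    intro a ha j
    have h1 : v j ⬝ᵥ (∑ k, a k • (fun i => D i k)) = a j :=
      dot_sum_smul (v j) _ a j (hPD j)
    rw [ha, dotProduct_zero] at h1
    exact h1.symm
  have hspanD : perp (Submodule.span ℝ SB) =
      Submodule.span ℝ (Set.range fun k : Fin (n - d) => fun i : Fin n => D i k) := by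
    apply le_antisymm
    · intro y hy
      set a : Fin n → ℝ := gᵀ.mulVec y with ha
      have hy' : y = H.mulVec a := by
        rw [ha, Matrix.mulVec_mulVec, hmul', Matrix.one_mulVec]
      have hza : ∀ l : Fin n, (l : ℕ) < d → a l = 0 := by
        intro l hl
        have hmem : (fun i => B i ⟨(l : ℕ), hl⟩) ∈ Submodule.span ℝ SB :=
          Submodule.subset_span ⟨⟨(l : ℕ), hl⟩, rfl⟩
        have h0 : (fun i => B i ⟨(l : ℕ), hl⟩) ⬝ᵥ y = 0 := hy _ hmem
        have hcol : (fun i => B i ⟨(l : ℕ), hl⟩) = (fun i => g i l) := by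
          funext i
          rw [hB]
          exact congrArg (g i) (Fin.ext rfl)
        rw [hcol] at h0
        show gᵀ.mulVec y l = 0
        simpa [Matrix.mulVec, dotProduct, Matrix.transpose_apply] using h0
      have hyD : y = ∑ k : Fin (n - d), a (ι k) • (fun i : Fin n => D i k) := by
        rw [hy']
        funext i
        rw [Finset.sum_apply]
        simp only [Pi.smul_apply, smul_eq_mul]
        show ∑ l : Fin n, H i l * a l = ∑ k, a (ι k) * D i k
        rw [← Fintype.sum_equiv (finCongr hnd)
          (fun l => H i (finCongr hnd l) * a (finCongr hnd l))
          (fun l => H i l * a l) (fun l => rfl), Fin.sum_univ_add]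
        have h0 : ∀ j : Fin d, j ∈ Finset.univ →
            H i (finCongr hnd (Fin.castAdd (n - d) j)) * a (finCongr hnd (Fin.castAdd (n - d) j)) = 0 := by
          intro j _
          rw [hza _ j.isLt, mul_zero]
        rw [Finset.sum_congr rfl h0, Finset.sum_const_zero, zero_add]
        apply Finset.sum_congr rfl
        intro k _
        rw [mul_comm]
        congr 1
        exact (hDH i k).symm
      rw [hyD]
      exact Submodule.sum_mem _ fun k _ =>
        Submodule.smul_mem _ _ (Submodule.subset_span ⟨k, rfl⟩)
    · rw [Submodule.span_le]
      rintro _ ⟨k, rfl⟩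
      exact hDperp k
  have hvle : Submodule.span ℝ (Set.range v) ≤
      Submodule.span ℝ (Set.range fun k : Fin (n - d) => fun i : Fin n => D i k) := by
    rw [← hspanD, Submodule.span_le]
    rintro _ ⟨j, rfl⟩
    exact (hπ _).1
  have hveq : Submodule.span ℝ (Set.range v) =
      Submodule.span ℝ (Set.range fun k : Fin (n - d) => fun i : Fin n => D i k) :=
    Submodule.eq_of_le_of_finrank_le hvle
      (by rw [finrank_span_eq_card hindD, finrank_span_eq_card hindv])
  have hstmt2 : Submodule.span ℝ (Set.range v) = perp (Submodule.span ℝ SB) :=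
    hveq.trans hspanD.symm
  refine ⟨hindv, hstmt2, ?_⟩
  set P : Matrix (Fin n) (Fin (n - d)) ℝ :=
    Matrix.of (fun i (j : Fin (n - d)) => π (fun k : Fin n => C k j) i) with hP
  have hPcol : ∀ j : Fin (n - d), (fun i => P i j) = v j := fun j => rfl
  have hPtD : Pᵀ * D = 1 := by
    ext j k
    rw [Matrix.mul_apply, Matrix.one_apply]
    show (v j) ⬝ᵥ (fun i => D i k) = _
    rw [hPD]
  have hrangeP : (Set.range fun j : Fin (n - d) => fun i : Fin n => P i j) = Set.range v := by
    congr 1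
  have hspanP : Submodule.span ℝ (zspan P) = Submodule.span ℝ (Set.range v) := by
    rw [span_zspan, hrangeP]
  ext y
  constructor
  · rintro ⟨c, rfl⟩
    constructor
    · rw [hspanP, hveq]
      show D.mulVec (fun k => (c k : ℝ)) ∈ _
      rw [mulVec_eq_sum_cols]
      exact Submodule.sum_mem _ fun k _ =>
        Submodule.smul_mem _ _ (Submodule.subset_span ⟨k, rfl⟩)
    · rintro x ⟨m, rfl⟩
      refine ⟨∑ j, m j * c j, ?_⟩
      show P.mulVec (fun j => (m j : ℝ)) ⬝ᵥ D.mulVec (fun k => (c k : ℝ)) = _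
      rw [← Matrix.vecMul_transpose P, Matrix.dotProduct_mulVec, Matrix.vecMul_vecMul,
        hPtD, Matrix.vecMul_one]
      show ∑ j, (m j : ℝ) * (c j : ℝ) = _
      push_cast
      rfl
  · rintro ⟨hy1, hy2⟩
    rw [hspanP, hveq, Submodule.mem_span_range_iff_exists_fun] at hy1
    obtain ⟨a, hay⟩ := hy1
    have hxz : ∀ j : Fin (n - d), v j ∈ zspan P := fun j => hPcol j ▸ col_mem_zspan P j
    choose m hm using fun j => hy2 (v j) (hxz j)
    have haj : ∀ j, a j = (m j : ℝ) := by
      intro j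
      rw [← hm j, ← hay]
      exact (dot_sum_smul (v j) _ a j (hPD j)).symm
    refine ⟨m, ?_⟩
    show D.mulVec (fun k => (m k : ℝ)) = y
    rw [← hay, mulVec_eq_sum_cols]
    exact Finset.sum_congr rfl fun k _ => by rw [haj k]
end
end

section
/- Let 1 ≤ d ≤ n−1 and let Λ be a primitive d-lattice in ℤⁿ. Then covol(Λ^⊥) = covol(Λ). -/
open Matrix

noncomputable section

namespace Stmt10Aux

section

def cV {n : ℕ} (c : Fin n → ℤ) : Fin n → ℝ := fun i => (c i : ℝ)

lemma cV_inj {n : ℕ} : Function.Injective (cV (n := n)) := by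
  intro a b h
  funext i
  have := congrFun h i
  simpa [cV] using Int.cast_injective this

lemma cV_zero {n : ℕ} : cV (0 : Fin n → ℤ) = 0 := by
  funext i
  simp [cV]

lemma cV_mulVec {n d : ℕ} (M : Matrix (Fin n) (Fin d) ℤ) (c : Fin d → ℤ) :
    (M.map (Int.cast : ℤ → ℝ)) *ᵥ (cV c) = cV (M *ᵥ c) := by
  funext i
  simp only [Matrix.mulVec, dotProduct, Matrix.map_apply, cV]
  push_cast
  rfl

lemma gram_det_ne_zero {m k : ℕ} (A : Matrix (Fin m) (Fin k) ℝ)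
    (h : Function.Injective A.mulVec) : (Aᵀ * A).det ≠ 0 := by
  have hker : ∀ x, (Aᵀ * A) *ᵥ x = 0 → x = 0 := by
    intro x hx
    have h1 : (A *ᵥ x) ⬝ᵥ (A *ᵥ x) = 0 := by
      have h0 := congrArg (fun v => dotProduct x v) hx
      simpa [← Matrix.mulVec_mulVec, Matrix.dotProduct_mulVec,
        Matrix.vecMul_transpose] using h0
    have h2 : A *ᵥ x = 0 := dotProduct_self_eq_zero.mp h1
    apply h
    simpa using h2
  have hinj : Function.Injective (Aᵀ * A).mulVec := by
    have : LinearMap.ker (Aᵀ * A).mulVecLin = ⊥ := by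
      rw [LinearMap.ker_eq_bot']
      intro x hx
      exact hker x hx
    have := LinearMap.ker_eq_bot.mp this
    exact this
  have hu := Matrix.mulVec_injective_iff_isUnit.mp hinj
  exact ((Matrix.isUnit_iff_isUnit_det _).mp hu).ne_zero


lemma exists_adapted (n d : ℕ) (hdn : d ≤ n) (B₀ : Matrix (Fin n) (Fin d) ℤ)
    (hinj : Function.Injective B₀.mulVec)
    (hsat : ∀ (k : ℤ) (x : Fin n → ℤ), k ≠ 0 →
      k • x ∈ LinearMap.range B₀.mulVecLin → x ∈ LinearMap.range B₀.mulVecLin) :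
    ∃ (U A : Matrix (Fin n) (Fin n) ℤ) (e : (Fin d ⊕ Fin (n - d)) ≃ Fin n),
      U * A = 1 ∧ A * U = 1 ∧ ∀ i j, U i (e (Sum.inl j)) = B₀ i j := by
  classical
  set N : Submodule ℤ (Fin n → ℤ) := LinearMap.range B₀.mulVecLin with hN
  -- basis of N
  have hinj' : Function.Injective B₀.mulVecLin := hinj
  have hbij : Function.Bijective B₀.mulVecLin.rangeRestrict := by
    constructor
    · intro a b hab
      apply hinj'
      exact congrArg Subtype.val hab
    · exact LinearMap.surjective_rangeRestrict _
  let eN : (Fin d → ℤ) ≃ₗ[ℤ] N := LinearEquiv.ofBijective _ hbij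
  let bN : Module.Basis (Fin d) ℤ N := (Pi.basisFun ℤ (Fin d)).map eN
  have hbN : ∀ j, ((bN j : Fin n → ℤ)) = fun i => B₀ i j := by
    intro j
    have h0 : (bN j : Fin n → ℤ) = B₀.mulVecLin ((Pi.basisFun ℤ (Fin d)) j) := rfl
    rw [h0, Pi.basisFun_apply, Matrix.mulVecLin_apply, Matrix.mulVec_single_one]
    rfl
  -- quotient is torsion free hence free
  haveI : NoZeroSMulDivisors ℤ ((Fin n → ℤ) ⧸ N) := by
    constructor
    intro a x hax
    by_cases ha : a = 0
    · exact Or.inl ha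
    · right
      obtain ⟨x₀, rfl⟩ := Submodule.Quotient.mk_surjective N x
      rw [← Submodule.Quotient.mk_smul] at hax
      rw [Submodule.Quotient.mk_eq_zero] at hax ⊢
      exact hsat a x₀ ha hax
  haveI : Module.Finite ℤ ((Fin n → ℤ) ⧸ N) := Module.Finite.quotient ℤ N
  haveI : Module.Free ℤ ((Fin n → ℤ) ⧸ N) := Module.free_of_finite_type_torsion_free'
  -- splitting
  obtain ⟨s, hs⟩ := Module.projective_lifting_property N.mkQ LinearMap.id
    (Submodule.mkQ_surjective N)
  have hs' : ∀ q, N.mkQ (s q) = q := fun q => congrFun (congrArg DFunLike.coe hs) q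
  have hsinj : Function.Injective s := by
    intro a b hab
    have := congrArg N.mkQ hab
    rwa [hs', hs'] at this
  set C : Submodule ℤ (Fin n → ℤ) := LinearMap.range s with hC
  have hcompl : IsCompl N C := by
    constructor
    · rw [disjoint_iff]
      ext x
      simp only [Submodule.mem_inf, Submodule.mem_bot]
      constructor
      · rintro ⟨hxN, q, rfl⟩
        have h1 : N.mkQ (s q) = 0 := (Submodule.Quotient.mk_eq_zero N).mpr hxN
        rw [hs'] at h1
        rw [h1, map_zero]
      · rintro rfl
        exact ⟨N.zero_mem, 0, map_zero s⟩
    · rw [codisjoint_iff]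
      ext x
      simp only [Submodule.mem_top, iff_true]
      have hmem : x - s (N.mkQ x) ∈ N := by
        rw [← Submodule.Quotient.mk_eq_zero]
        have : N.mkQ (x - s (N.mkQ x)) = 0 := by
          rw [map_sub, hs', sub_self]
        simpa using this
      have : x = (x - s (N.mkQ x)) + s (N.mkQ x) := by ring
      rw [this]
      exact Submodule.add_mem_sup hmem ⟨_, rfl⟩
  let eC : ((Fin n → ℤ) ⧸ N) ≃ₗ[ℤ] C := LinearEquiv.ofInjective s hsinj
  haveI : Module.Free ℤ C := Module.Free.of_equiv eC
  haveI : Module.Finite ℤ C := Module.Finite.equiv eC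
  haveI : Module.Free ℤ N := Module.Free.of_basis bN
  -- finrank computation
  have hrN : Module.finrank ℤ N = d := by
    rw [Module.finrank_eq_card_basis bN, Fintype.card_fin]
  have hrtot : Module.finrank ℤ (Fin n → ℤ) = n := by
    simp [Module.finrank_pi]
  have hsum : Module.finrank ℤ N + Module.finrank ℤ C = n := by
    have := (Submodule.prodEquivOfIsCompl N C hcompl).finrank_eq
    rwa [Module.finrank_prod, hrtot] at this
  have hrC : Module.finrank ℤ C = n - d := by omega
  let bC : Module.Basis (Fin (n - d)) ℤ C := (Module.finBasis ℤ C).reindex (finCongr hrC)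
  let big : Module.Basis (Fin d ⊕ Fin (n - d)) ℤ (Fin n → ℤ) :=
    (bN.prod bC).map (Submodule.prodEquivOfIsCompl N C hcompl)
  let e : (Fin d ⊕ Fin (n - d)) ≃ Fin n := finSumFinEquiv.trans (finCongr (by omega))
  let bigF : Module.Basis (Fin n) ℤ (Fin n → ℤ) := big.reindex e
  let U : Matrix (Fin n) (Fin n) ℤ := (Pi.basisFun ℤ (Fin n)).toMatrix bigF
  haveI : Invertible U := (Pi.basisFun ℤ (Fin n)).invertibleToMatrix bigF
  refine ⟨U, ⅟U, e, mul_invOf_self U, invOf_mul_self U, ?_⟩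
  intro i j
  have h1 : U i (e (Sum.inl j)) = (bigF (e (Sum.inl j))) i := by
    simp only [U, Module.Basis.toMatrix_apply, Pi.basisFun_repr]
  rw [h1]
  have h2 : bigF (e (Sum.inl j)) = big (Sum.inl j) := by
    rw [Module.Basis.reindex_apply, Equiv.symm_apply_apply]
  rw [h2]
  have h3 : big (Sum.inl j) = (bN j : Fin n → ℤ) := by
    show (Submodule.prodEquivOfIsCompl N C hcompl) ((bN.prod bC) (Sum.inl j)) = _
    have : (bN.prod bC) (Sum.inl j) = (bN j, 0) :=
      Prod.ext (Module.Basis.prod_apply_inl_fst _ _ _) (Module.Basis.prod_apply_inl_snd _ _ _)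
    rw [this]
    simp [Submodule.coe_prodEquivOfIsCompl]
  rw [h3, hbN]


lemma mulVec_split {R : Type*} [CommRing R] {n d : ℕ} (e : (Fin d ⊕ Fin (n - d)) ≃ Fin n)
    (A : Matrix (Fin n) (Fin n) R) (y : Fin n → R)
    (hy : ∀ j, y (e (Sum.inl j)) = 0) :
    A *ᵥ y = (A.submatrix id (fun k => e (Sum.inr k))) *ᵥ (fun k => y (e (Sum.inr k))) := by
  funext i
  simp only [Matrix.mulVec, dotProduct, Matrix.submatrix_apply, id_eq]
  rw [← Equiv.sum_comp e (fun m => A i m * y m), Fintype.sum_sum_type]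
  simp [hy]

lemma eq_one_of_mulVec_id {k : ℕ} (M : Matrix (Fin k) (Fin k) ℤ)
    (h : ∀ v, M *ᵥ v = v) : M = 1 := by
  ext a b
  have := congrFun (h (Pi.single b 1)) a
  rw [Matrix.mulVec_single_one] at this
  rw [Matrix.one_apply]
  simpa [Pi.single_apply, Matrix.transpose_apply] using this


end

end Stmt10Aux

open Stmt10Aux

/-- for a primitive `d`-lattice `Λ ⊆ ℤⁿ`,
`covol(Λ^⊥) = covol(Λ)` where `Λ^⊥ = ℤⁿ ∩ V_Λ^⊥`. -/
theorem stmt10 (n d : ℕ) (hd : 1 ≤ d) (hdn : d ≤ n - 1)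
    (Λ : Set (Fin n → ℝ)) (hΛ : IsDLattice d Λ)
    (hprim : IsPrimitiveIn Λ (intLattice n))
    (B : Matrix (Fin n) (Fin d) ℝ) (hB : IsLatticeBasis B Λ)
    (P : Matrix (Fin n) (Fin (n - d)) ℝ)
    (hP : IsLatticeBasis P
      (intLattice n ∩ (perp (Submodule.span ℝ Λ) : Set (Fin n → ℝ)))) :
    Real.sqrt (Pᵀ * P).det = Real.sqrt (Bᵀ * B).det := by
  classical
  obtain ⟨hBli, hBspan⟩ := hB
  obtain ⟨hPli, hPspan⟩ := hP
  have hdn' : d ≤ n := by omega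
  set S : Set (Fin n → ℝ) :=
    intLattice n ∩ (perp (Submodule.span ℝ Λ) : Set (Fin n → ℝ)) with hS
  -- columns of a basis matrix belong to the lattice
  have hcol : ∀ {k : ℕ} (M : Matrix (Fin n) (Fin k) ℝ) (j : Fin k), Mᵀ j ∈ zspan M := by
    intro k M j
    refine ⟨Pi.single j 1, ?_⟩
    have h0 : (fun j' => ((Pi.single j 1 : Fin k → ℤ) j' : ℝ)) = Pi.single j 1 := by
      funext j'
      simp [Pi.single_apply, apply_ite]
    show (M *ᵥ fun j' => ((Pi.single j 1 : Fin k → ℤ) j' : ℝ)) = Mᵀ j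
    rw [h0, Matrix.mulVec_single_one]
    rfl
  have hΛint : Λ ⊆ intLattice n := by
    rw [hprim]; exact Set.inter_subset_left
  -- B has integer entries
  have hBint : ∀ j, ∃ c : Fin n → ℤ, ∀ i, B i j = (c i : ℝ) := by
    intro j
    obtain ⟨c, hc⟩ := hΛint (hBspan ▸ hcol B j)
    exact ⟨c, fun i => (congrFun hc i).symm⟩
  choose Bg hBg using hBint
  set B₀ : Matrix (Fin n) (Fin d) ℤ := Matrix.of (fun i j => Bg j i) with hB₀
  have hBeq : B = B₀.map (Int.cast : ℤ → ℝ) := by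
    ext i j; exact hBg j i
  -- similarly for P
  have hPint : ∀ j, ∃ c : Fin n → ℤ, ∀ i, P i j = (c i : ℝ) := by
    intro j
    obtain ⟨c, hc⟩ := (Set.inter_subset_left : S ⊆ intLattice n) (hPspan ▸ hcol P j)
    exact ⟨c, fun i => (congrFun hc i).symm⟩
  choose Pg hPg using hPint
  set P₀ : Matrix (Fin n) (Fin (n - d)) ℤ := Matrix.of (fun i j => Pg j i) with hP₀
  have hPeq : P = P₀.map (Int.cast : ℤ → ℝ) := by
    ext i j; exact hPg j i
  -- Λ as the image of an integer lattice
  have hBcast : ∀ c : Fin d → ℤ, (B.mulVec fun j => ((c j : ℝ))) = cV (B₀ *ᵥ c) := by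
    intro c
    rw [hBeq]
    exact cV_mulVec B₀ c
  have hzspan : ∀ x : Fin d → ℤ, cV (B₀ *ᵥ x) ∈ Λ := by
    intro x
    rw [hBspan]
    exact ⟨x, hBcast x⟩
  have hmemN : ∀ x : Fin n → ℝ, x ∈ Λ ↔ ∃ c : Fin d → ℤ, x = cV (B₀ *ᵥ c) := by
    intro x
    constructor
    · intro hx
      rw [hBspan] at hx
      obtain ⟨c, rfl⟩ := hx
      exact ⟨c, hBcast c⟩
    · rintro ⟨c, rfl⟩; exact hzspan c
  -- injectivity of B.mulVec over ℝ
  have hBmulR : Function.Injective B.mulVec := Matrix.mulVec_injective_iff.mpr hBli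
  have hBmul : Function.Injective B₀.mulVec := by
    intro a b hab
    have : B *ᵥ (cV a) = B *ᵥ (cV b) := by
      rw [hBeq, cV_mulVec, cV_mulVec, hab]
    exact cV_inj (hBmulR this)
  -- saturation
  have hsat : ∀ (k : ℤ) (x : Fin n → ℤ), k ≠ 0 →
      k • x ∈ LinearMap.range B₀.mulVecLin → x ∈ LinearMap.range B₀.mulVecLin := by
    intro k x hk hkx
    obtain ⟨c, hc⟩ := hkx
    have h1 : cV (k • x) ∈ Λ := by
      rw [hmemN]; exact ⟨c, by rw [← hc]; rfl⟩
    have hkr : (k : ℝ) ≠ 0 := Int.cast_ne_zero.mpr hk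
    have h2 : cV (k • x) = (k : ℝ) • cV x := by
      funext i; simp [cV]
    have h3 : cV x ∈ Submodule.span ℝ Λ := by
      have hmem : (k : ℝ) • cV x ∈ Submodule.span ℝ Λ := h2 ▸ Submodule.subset_span h1
      have := Submodule.smul_mem (Submodule.span ℝ Λ) ((k : ℝ)⁻¹) hmem
      rwa [smul_smul, inv_mul_cancel₀ hkr, one_smul] at this
    have h4 : cV x ∈ Λ := by
      rw [hprim]
      exact ⟨⟨x, rfl⟩, h3⟩
    obtain ⟨c', hc'⟩ := (hmemN _).mp h4
    exact ⟨c', (cV_inj hc').symm⟩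
  -- the adapted unimodular basis
  obtain ⟨U, Apre, e, hUA, hAU, hUcol⟩ := exists_adapted n d hdn' B₀ hBmul hsat
  set A₀ : Matrix (Fin n) (Fin n) ℤ := Apreᵀ with hA₀
  have h1 : Uᵀ * A₀ = 1 := by
    rw [hA₀, ← Matrix.transpose_mul, hAU, Matrix.transpose_one]
  have h2 : A₀ * Uᵀ = 1 := by
    rw [hA₀, ← Matrix.transpose_mul, hUA, Matrix.transpose_one]
  set jl : Fin d → Fin n := fun j => e (Sum.inl j) with hjl
  set jr : Fin (n - d) → Fin n := fun k => e (Sum.inr k) with hjr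
  have hjlr : ∀ j k, jl j ≠ jr k := by
    intro j k h
    exact absurd (e.injective h) (by simp)
  set C₀ : Matrix (Fin n) (Fin (n - d)) ℤ := A₀.submatrix id jr with hC₀
  -- orthogonality of B₀ and C₀
  have hBC : B₀ᵀ * C₀ = 0 := by
    ext j k
    have : (B₀ᵀ * C₀) j k = (Uᵀ * A₀) (jl j) (jr k) := by
      simp only [Matrix.mul_apply, Matrix.transpose_apply, hC₀, Matrix.submatrix_apply, id_eq]
      exact Finset.sum_congr rfl fun i _ => by rw [hUcol i j]
    rw [this, h1, Matrix.one_apply_ne (hjlr j k)]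
    simp
  -- A₀ mulVec injective over ℤ
  have hA₀inj : Function.Injective (A₀.mulVec (α := ℤ)) := by
    intro a b hab
    have := congrArg (fun v => Uᵀ *ᵥ v) hab
    simpa [Matrix.mulVec_mulVec, h1] using this
  -- C₀ mulVec as A₀ mulVec of an extension
  have hCA : ∀ (w : Fin (n - d) → ℤ), C₀ *ᵥ w = A₀ *ᵥ (fun m => Sum.elim 0 w (e.symm m)) := by
    intro w
    rw [mulVec_split e A₀ _ (by intro j; simp)]
    congr 1
    funext k
    simp
  have hC₀inj : Function.Injective (C₀.mulVec (α := ℤ)) := by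
    intro a b hab
    rw [hCA, hCA] at hab
    have h := hA₀inj hab
    funext k
    have := congrFun h (jr k)
    simpa [hjr] using this
  -- membership in N⊥
  have hNperp : ∀ x : Fin n → ℤ, B₀ᵀ *ᵥ x = 0 ↔ ∃ w, x = C₀ *ᵥ w := by
    intro x
    constructor
    · intro hx
      set y : Fin n → ℤ := Uᵀ *ᵥ x with hy
      have hxy : x = A₀ *ᵥ y := by
        rw [hy, Matrix.mulVec_mulVec, h2, Matrix.one_mulVec]
      have hy0 : ∀ j, y (e (Sum.inl j)) = 0 := by
        intro j
        have : y (jl j) = (B₀ᵀ *ᵥ x) j := by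
          simp only [hy, Matrix.mulVec, dotProduct, Matrix.transpose_apply]
          exact Finset.sum_congr rfl fun i _ => by rw [hUcol i j]
        rw [hjl] at this
        rw [this, hx]
        rfl
      refine ⟨fun k => y (jr k), ?_⟩
      rw [hxy, mulVec_split e A₀ y hy0]
    · rintro ⟨w, rfl⟩
      rw [Matrix.mulVec_mulVec, hBC, Matrix.zero_mulVec]
  -- perp characterization
  have hspan : Submodule.span ℝ Λ = LinearMap.range B.mulVecLin := by
    apply le_antisymm
    · rw [Submodule.span_le]
      intro x hx
      rw [hBspan] at hx
      obtain ⟨c, rfl⟩ := hx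
      exact ⟨fun j => (c j : ℝ), rfl⟩
    · rw [Matrix.range_mulVecLin, Submodule.span_le]
      rintro x ⟨j, rfl⟩
      exact Submodule.subset_span (hBspan ▸ hcol B j)
  have hperp_mem : ∀ y : Fin n → ℝ,
      (y ∈ perp (Submodule.span ℝ Λ)) ↔ Bᵀ *ᵥ y = 0 := by
    intro y
    constructor
    · intro hy
      funext j
      have hj : (Bᵀ j : Fin n → ℝ) ∈ Submodule.span ℝ Λ :=
        Submodule.subset_span (hBspan ▸ hcol B j)
      have := hy (Bᵀ j) hj
      simpa [Matrix.mulVec, dotProduct] using this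
    · intro hy x hx
      rw [hspan] at hx
      obtain ⟨c, rfl⟩ := hx
      show (B *ᵥ c) ⬝ᵥ y = 0
      rw [Matrix.mulVec_transpose] at hy
      rw [dotProduct_comm, Matrix.dotProduct_mulVec, hy, zero_dotProduct]
  -- cast compatibility for Bᵀ
  have hBTcast : ∀ x₀ : Fin n → ℤ, Bᵀ *ᵥ (cV x₀) = cV (B₀ᵀ *ᵥ x₀) := by
    intro x₀
    rw [hBeq, ← Matrix.transpose_map]
    exact cV_mulVec B₀ᵀ x₀
  -- characterize S via integer vectors
  have hScast : ∀ x₀ : Fin n → ℤ, (cV x₀ ∈ S ↔ B₀ᵀ *ᵥ x₀ = 0) := by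
    intro x₀
    constructor
    · intro hx
      have h3 := (hperp_mem _).mp hx.2
      rw [hBTcast] at h3
      apply cV_inj
      rw [h3]
      exact cV_zero.symm
    · intro h
      refine ⟨⟨x₀, rfl⟩, (hperp_mem _).mpr ?_⟩
      rw [hBTcast, h]
      exact cV_zero
  have hmemS : ∀ x : Fin n → ℝ, x ∈ S ↔ ∃ w : Fin (n - d) → ℤ, x = cV (C₀ *ᵥ w) := by
    intro x
    constructor
    · intro hx
      obtain ⟨x₀, hx₀⟩ := hx.1
      subst hx₀
      have h6 : B₀ᵀ *ᵥ x₀ = 0 := (hScast x₀).mp hx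
      obtain ⟨w, rfl⟩ := (hNperp x₀).mp h6
      exact ⟨w, rfl⟩
    · rintro ⟨w, rfl⟩
      exact (hScast _).mpr ((hNperp _).mpr ⟨w, rfl⟩)
  -- P₀ and C₀ generate the same integer lattice
  have hPcast : ∀ c : Fin (n - d) → ℤ, (P.mulVec fun j => ((c j : ℝ))) = cV (P₀ *ᵥ c) := by
    intro c
    rw [hPeq]
    exact cV_mulVec P₀ c
  have hcolPmem : ∀ j, Pᵀ j ∈ S := by
    intro j
    rw [hPspan]
    exact hcol P j
  have hPC : ∀ j, ∃ w, P₀ᵀ j = C₀ *ᵥ w := by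
    intro j
    obtain ⟨w, hw⟩ := (hmemS (Pᵀ j)).mp (hcolPmem j)
    refine ⟨w, cV_inj ?_⟩
    rw [← hw]
    funext i
    simp [cV, hPeq]
  choose wP hwP using hPC
  set W : Matrix (Fin (n - d)) (Fin (n - d)) ℤ := Matrix.of (fun k j => wP j k) with hWdef
  have hPW : P₀ = C₀ * W := by
    ext i j
    have := congrFun (hwP j) i
    simpa [Matrix.mul_apply, Matrix.mulVec, dotProduct, hWdef] using this
  have hCmem : ∀ k, cV (C₀ᵀ k) ∈ S := by
    intro k
    apply (hmemS _).mpr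
    exact ⟨Pi.single k 1, by rw [Matrix.mulVec_single_one]; rfl⟩
  have hCP : ∀ k, ∃ v, C₀ᵀ k = P₀ *ᵥ v := by
    intro k
    have hmem : cV (C₀ᵀ k) ∈ zspan P := by rw [← hPspan]; exact hCmem k
    obtain ⟨v, hv⟩ := hmem
    refine ⟨v, cV_inj ?_⟩
    rw [← hv]
    exact hPcast v
  choose vC hvC using hCP
  set W' : Matrix (Fin (n - d)) (Fin (n - d)) ℤ := Matrix.of (fun j k => vC k j) with hW'def
  have hCW : C₀ = P₀ * W' := by
    ext i k
    have := congrFun (hvC k) i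
    simpa [Matrix.mul_apply, Matrix.mulVec, dotProduct, hW'def] using this
  have hWW : W * W' = 1 := by
    have hC₀C₀ : C₀ * (W * W') = C₀ := by
      rw [← Matrix.mul_assoc, ← hPW, ← hCW]
    apply eq_one_of_mulVec_id
    intro vv
    apply hC₀inj
    rw [Matrix.mulVec_mulVec, hC₀C₀]
  have hdetW : W.det * W'.det = 1 := by
    rw [← Matrix.det_mul, hWW, Matrix.det_one]
  have hdetW2 : W.det ^ 2 = 1 := by
    rcases Int.isUnit_iff.mp (IsUnit.of_mul_eq_one _ hdetW) with h | h <;> rw [h] <;> ring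
  have hPP : (P₀ᵀ * P₀).det = (C₀ᵀ * C₀).det := by
    have hsplit : P₀ᵀ * P₀ = Wᵀ * (C₀ᵀ * C₀ * W) := by
      rw [hPW, Matrix.transpose_mul, Matrix.mul_assoc, Matrix.mul_assoc]
    rw [hsplit, Matrix.det_mul, Matrix.det_mul, Matrix.det_transpose]
    linear_combination ((C₀ᵀ * C₀).det) * hdetW2
  -- the main determinant identity det(B₀ᵀB₀) = det(C₀ᵀC₀)
  set FC : Matrix (Fin n) (Fin d ⊕ Fin (n - d)) ℤ := Matrix.fromCols B₀ C₀ with hFCdef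
  set Msq : Matrix (Fin n) (Fin n) ℤ := FC.submatrix id e.symm with hMsqdef
  have hBCt : C₀ᵀ * B₀ = 0 := by
    have h' : C₀ᵀ * B₀ = (B₀ᵀ * C₀)ᵀ := by
      rw [Matrix.transpose_mul, Matrix.transpose_transpose]
    rw [h', hBC, Matrix.transpose_zero]
  have hFC : FCᵀ * FC = Matrix.fromBlocks (B₀ᵀ * B₀) 0 0 (C₀ᵀ * C₀) := by
    rw [hFCdef, Matrix.transpose_fromCols, Matrix.fromRows_mul_fromCols, hBC, hBCt]
  have h13a : Msqᵀ * Msq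
      = (Matrix.fromBlocks (B₀ᵀ * B₀) 0 0 (C₀ᵀ * C₀)).submatrix e.symm e.symm := by
    ext m m'
    have hLL : (Msqᵀ * Msq) m m' = (FCᵀ * FC) (e.symm m) (e.symm m') := by
      simp [hMsqdef, Matrix.mul_apply]
    rw [hLL, hFC, Matrix.submatrix_apply]
  have hdet1 : Msq.det ^ 2 = (B₀ᵀ * B₀).det * (C₀ᵀ * C₀).det := by
    have hh := congrArg Matrix.det h13a
    rwa [Matrix.det_mul, Matrix.det_transpose, Matrix.det_submatrix_equiv_self,
      Matrix.det_fromBlocks_zero₂₁, ← pow_two] at hh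
  set X : Matrix (Fin d) (Fin (n - d)) ℤ :=
    Matrix.of (fun j k => ∑ i, A₀ i (jl j) * C₀ i k) with hXdef
  have h13b : A₀ᵀ * Msq
      = (Matrix.fromBlocks 1 X 0 (C₀ᵀ * C₀)).submatrix e.symm e.symm := by
    ext m m'
    rw [Matrix.submatrix_apply]
    have hL : (A₀ᵀ * Msq) m m' = ∑ i, A₀ i m * FC i (e.symm m') := by
      simp [hMsqdef, Matrix.mul_apply]
    rw [hL]
    obtain ⟨s, rfl⟩ : ∃ s, m = e s := ⟨e.symm m, (e.apply_symm_apply m).symm⟩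
    obtain ⟨t, rfl⟩ : ∃ t, m' = e t := ⟨e.symm m', (e.apply_symm_apply m').symm⟩
    rw [Equiv.symm_apply_apply, Equiv.symm_apply_apply]
    rcases s with j | k <;> rcases t with j' | k'
    · -- identity block
      rw [Matrix.fromBlocks_apply₁₁]
      have hJ : ∑ i, A₀ i (e (Sum.inl j)) * FC i (Sum.inl j') = (Uᵀ * A₀) (jl j') (jl j) := by
        rw [Matrix.mul_apply]
        refine Finset.sum_congr rfl fun i _ => ?_
        rw [hFCdef, Matrix.fromCols_apply_inl, Matrix.transpose_apply, hUcol i j']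
        ring
      rw [hJ, h1]
      by_cases hjj : j' = j
      · subst hjj; simp
      · rw [Matrix.one_apply_ne (fun hc => hjj (Sum.inl.inj (e.injective hc))),
          Matrix.one_apply_ne (Ne.symm hjj)]
    · -- X block
      rw [Matrix.fromBlocks_apply₁₂]
      simp [hXdef, hFCdef, hjl]
    · -- zero block
      rw [Matrix.fromBlocks_apply₂₁]
      have hJ : ∑ i, A₀ i (e (Sum.inr k)) * FC i (Sum.inl j') = (Uᵀ * A₀) (jl j') (jr k) := by
        rw [Matrix.mul_apply]
        refine Finset.sum_congr rfl fun i _ => ?_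
        rw [hFCdef, Matrix.fromCols_apply_inl, Matrix.transpose_apply, hUcol i j']
        ring
      rw [hJ, h1, Matrix.one_apply_ne (hjlr j' k), Matrix.zero_apply]
    · -- gram block
      rw [Matrix.fromBlocks_apply₂₂, Matrix.mul_apply]
      refine Finset.sum_congr rfl fun i _ => ?_
      rw [hFCdef, Matrix.fromCols_apply_inr, Matrix.transpose_apply]
      rfl
  have hdet2 : A₀.det * Msq.det = (C₀ᵀ * C₀).det := by
    have hh := congrArg Matrix.det h13b
    rwa [Matrix.det_mul, Matrix.det_transpose, Matrix.det_submatrix_equiv_self,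
      Matrix.det_fromBlocks_zero₂₁, Matrix.det_one, one_mul] at hh
  have hdetA : A₀.det = 1 ∨ A₀.det = -1 := by
    have hh : A₀.det * Uᵀ.det = 1 := by rw [← Matrix.det_mul, h2, Matrix.det_one]
    exact Int.isUnit_iff.mp (IsUnit.of_mul_eq_one _ hh)
  have hA2 : A₀.det ^ 2 = 1 := by
    rcases hdetA with h' | h' <;> rw [h'] <;> ring
  have hMsqC : Msq.det ^ 2 = (C₀ᵀ * C₀).det ^ 2 :=
    calc Msq.det ^ 2 = A₀.det ^ 2 * Msq.det ^ 2 := by rw [hA2, one_mul]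
      _ = (A₀.det * Msq.det) ^ 2 := by rw [mul_pow]
      _ = (C₀ᵀ * C₀).det ^ 2 := by rw [hdet2]
  -- nonvanishing of the Gram determinant of C₀
  set C' : Matrix (Fin n) (Fin (n - d)) ℝ := C₀.map (Int.cast : ℤ → ℝ) with hC'def
  have hcast_eq : (Int.cast : ℤ → ℝ) = ⇑(Int.castRingHom ℝ) := rfl
  have hUr : (Uᵀ.map (Int.cast : ℤ → ℝ)) * (A₀.map (Int.cast : ℤ → ℝ)) = 1 := by
    rw [hcast_eq, ← Matrix.map_mul, h1]
    exact Matrix.map_one _ (by simp) (by simp)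
  have hArinj : Function.Injective ((A₀.map (Int.cast : ℤ → ℝ)).mulVec) := by
    intro a b hab
    have hh := congrArg (fun v => (Uᵀ.map (Int.cast : ℤ → ℝ)) *ᵥ v) hab
    simpa [Matrix.mulVec_mulVec, hUr] using hh
  have hC'A : C' = (A₀.map (Int.cast : ℤ → ℝ)).submatrix id jr := by
    ext i k
    rfl
  have hC'inj : Function.Injective (C'.mulVec) := by
    intro a b hab
    rw [hC'A] at hab
    have hsplit : ∀ w : Fin (n - d) → ℝ,
        (A₀.map (Int.cast : ℤ → ℝ)).submatrix id (fun k => e (Sum.inr k)) *ᵥ w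
          = (A₀.map (Int.cast : ℤ → ℝ)) *ᵥ (fun m => Sum.elim 0 w (e.symm m)) := by
      intro w
      rw [mulVec_split e _ _ (by intro j; simp)]
      congr 1
      funext k
      simp
    rw [hjr, hsplit, hsplit] at hab
    have hh := hArinj hab
    funext k
    have := congrFun hh (e (Sum.inr k))
    simpa using this
  have hgram : (C'ᵀ * C').det ≠ 0 := gram_det_ne_zero C' hC'inj
  have hC'G : C'ᵀ * C' = (C₀ᵀ * C₀).map (Int.cast : ℤ → ℝ) := by
    rw [hC'def, ← Matrix.transpose_map, hcast_eq, ← Matrix.map_mul]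
  have hdetCne : (C₀ᵀ * C₀).det ≠ 0 := by
    intro h0
    apply hgram
    have hcst : ((C₀ᵀ * C₀).map ⇑(Int.castRingHom ℝ)).det = (((C₀ᵀ * C₀).det : ℤ) : ℝ) :=
      ((Int.castRingHom ℝ).map_det _).symm
    rw [hC'G, hcast_eq, hcst, h0]
    simp
  -- conclude the integer determinant equality
  have hkey : (B₀ᵀ * B₀).det = (C₀ᵀ * C₀).det := by
    have hh : (B₀ᵀ * B₀).det * (C₀ᵀ * C₀).det = (C₀ᵀ * C₀).det * (C₀ᵀ * C₀).det := by
      rw [← hdet1, hMsqC]; ring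
    exact mul_right_cancel₀ hdetCne hh
  -- cast back to ℝ
  have hPPd : (Pᵀ * P).det = (((P₀ᵀ * P₀).det : ℤ) : ℝ) := by
    rw [hPeq, ← Matrix.transpose_map, hcast_eq, ← Matrix.map_mul]
    exact ((Int.castRingHom ℝ).map_det (P₀ᵀ * P₀)).symm
  have hBBd : (Bᵀ * B).det = (((B₀ᵀ * B₀).det : ℤ) : ℝ) := by
    rw [hBeq, ← Matrix.transpose_map, hcast_eq, ← Matrix.map_mul]
    exact ((Int.castRingHom ℝ).map_det (B₀ᵀ * B₀)).symm
  rw [hPPd, hBBd, hPP, hkey]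
end
end
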